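/- Let Φ : ℝ^ℓ → ℝ be positively p-homogeneous (p = d/(d−α), 0 < α < d) with Φ|_{S^{ℓ−1}} Lipschitz, and K : ℝ^d → ℝ^ℓ positively (α−d)-homogeneous with K|_{S^{d−1}} Lipschitz and K nonvanishing. If f ∈ L^1 is supported in the unit ball with ∫ f = 1, then |Φ(K*f(x)) − Φ(K(x))| ≤ C |x|^{−d−1} for all |x| ≥ 2 with C = C(K, Φ, ‖f‖_{L^1}). -/

import Mathlib

open MeasureTheory Set

lemma aux_rpow_lip (q : ℝ) : ∃ c : ℝ, 0 ≤ c ∧ ∀ u v : ℝ, u ∈ Set.Icc (1/2:ℝ) (3/2) →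
    v ∈ Set.Icc (1/2:ℝ) (3/2) → |u ^ q - v ^ q| ≤ c * |u - v| := by
  set c : ℝ := |q| * max ((1/2:ℝ) ^ (q-1)) ((3/2:ℝ) ^ (q-1)) with hc
  refine ⟨c, by positivity, fun u v hu hv => ?_⟩
  have hder : ∀ t ∈ Set.Icc (1/2:ℝ) (3/2), HasDerivWithinAt (fun s : ℝ => s ^ q)
      (q * t ^ (q-1)) (Set.Icc (1/2:ℝ) (3/2)) t := by
    intro t ht
    exact (Real.hasDerivAt_rpow_const (Or.inl (by intro h; rw [h] at ht; exact absurd ht.1 (by norm_num)))).hasDerivWithinAt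
  have hbound : ∀ t ∈ Set.Icc (1/2:ℝ) (3/2), ‖q * t ^ (q-1)‖ ≤ c := by
    intro t ht
    have ht0 : (0:ℝ) < t := by linarith [ht.1]
    have h1 : t ^ (q-1) ≤ max ((1/2:ℝ) ^ (q-1)) ((3/2:ℝ) ^ (q-1)) := by
      rcases le_or_gt 0 (q-1) with h | h
      · exact le_max_of_le_right (Real.rpow_le_rpow ht0.le ht.2 h)
      · exact le_max_of_le_left (Real.rpow_le_rpow_of_nonpos (by norm_num) ht.1 h.le)
    have h2 : (0:ℝ) ≤ t ^ (q-1) := Real.rpow_nonneg ht0.le _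
    rw [norm_mul, Real.norm_eq_abs, Real.norm_eq_abs, abs_of_nonneg h2]
    exact mul_le_mul_of_nonneg_left h1 (abs_nonneg q)
  have := (convex_Icc (1/2:ℝ) (3/2)).norm_image_sub_le_of_norm_hasDerivWithin_le
    hder hbound hv hu
  simpa [Real.norm_eq_abs] using this

lemma aux_unit_sub {E : Type*} [NormedAddCommGroup E] [NormedSpace ℝ E] (z w : E)
    (hz : z ≠ 0) : ‖‖z‖⁻¹ • z - ‖w‖⁻¹ • w‖ ≤ 2 * ‖z - w‖ / ‖z‖ := by
  have hz0 : (0:ℝ) < ‖z‖ := norm_pos_iff.2 hz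
  rcases eq_or_ne w 0 with rfl | hw
  · simp only [norm_zero, inv_zero, zero_smul, sub_zero, sub_zero]
    rw [norm_smul, norm_inv, norm_norm, inv_mul_cancel₀ hz0.ne', le_div_iff₀ hz0]
    linarith
  · have hw0 : (0:ℝ) < ‖w‖ := norm_pos_iff.2 hw
    have key : ‖z‖⁻¹ • z - ‖w‖⁻¹ • w = ‖z‖⁻¹ • (z - w) + (‖z‖⁻¹ - ‖w‖⁻¹) • w := by
      rw [smul_sub, sub_smul]; abel
    rw [key]
    have h1 : ‖‖z‖⁻¹ • (z - w)‖ = ‖z - w‖ / ‖z‖ := by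
      rw [norm_smul, norm_inv, norm_norm]; ring
    have habs : |‖w‖ - ‖z‖| ≤ ‖z - w‖ := by
      rw [norm_sub_rev]; exact abs_norm_sub_norm_le w z
    have h2 : ‖(‖z‖⁻¹ - ‖w‖⁻¹) • w‖ ≤ ‖z - w‖ / ‖z‖ := by
      rw [norm_smul, Real.norm_eq_abs]
      have e1 : ‖z‖⁻¹ - ‖w‖⁻¹ = (‖w‖ - ‖z‖) / (‖z‖ * ‖w‖) := by field_simp
      rw [e1, abs_div, abs_of_pos (show (0:ℝ) < ‖z‖ * ‖w‖ by positivity)]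
      have e2 : |‖w‖ - ‖z‖| / (‖z‖ * ‖w‖) * ‖w‖ = |‖w‖ - ‖z‖| / ‖z‖ := by
        field_simp
      rw [e2]
      gcongr
    calc ‖‖z‖⁻¹ • (z - w) + (‖z‖⁻¹ - ‖w‖⁻¹) • w‖
        ≤ ‖‖z‖⁻¹ • (z - w)‖ + ‖(‖z‖⁻¹ - ‖w‖⁻¹) • w‖ := norm_add_le _ _
    _ ≤ ‖z - w‖ / ‖z‖ + ‖z - w‖ / ‖z‖ := by rw [h1]; exact add_le_add_right h2 _
    _ = 2 * ‖z - w‖ / ‖z‖ := by ring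

set_option maxHeartbeats 2000000 in
theorem stmt9 (d ℓ : ℕ) (α p L L' M₁ : ℝ) (hα : 0 < α) (hαd : α < d)
    (hp : p = d / (d - α))
    (K : EuclideanSpace ℝ (Fin d) → EuclideanSpace ℝ (Fin ℓ))
    (Φ : EuclideanSpace ℝ (Fin ℓ) → ℝ)
    (hK : ∀ (x : EuclideanSpace ℝ (Fin d)) (lam : ℝ), 0 < lam →
      K (lam • x) = lam ^ (α - d) • K x)
    (hKL : ∀ x y : EuclideanSpace ℝ (Fin d), ‖x‖ = 1 → ‖y‖ = 1 →
      ‖K x - K y‖ ≤ L * ‖x - y‖)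
    (hKne : ∀ x : EuclideanSpace ℝ (Fin d), x ≠ 0 → K x ≠ 0)
    (hΦ : ∀ (v : EuclideanSpace ℝ (Fin ℓ)) (lam : ℝ), 0 < lam →
      Φ (lam • v) = lam ^ p * Φ v)
    (hΦL : ∀ v w : EuclideanSpace ℝ (Fin ℓ), ‖v‖ = 1 → ‖w‖ = 1 →
      |Φ v - Φ w| ≤ L' * ‖v - w‖) :
    ∃ C : ℝ, ∀ f : EuclideanSpace ℝ (Fin d) → ℝ, Integrable f →
      Function.support f ⊆ Metric.closedBall 0 1 → (∫ y, f y) = 1 →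
      (∫ y, |f y|) ≤ M₁ →
      ∀ x : EuclideanSpace ℝ (Fin d), 2 ≤ ‖x‖ →
        |Φ (∫ y, f y • K (x - y)) - Φ (K x)| ≤ C * ‖x‖ ^ (-(d : ℝ) - 1) := by
  have hd0 : (0:ℝ) < d := hα.trans hαd
  have hdpos : 0 < d := by exact_mod_cast hd0
  have hdα : (0:ℝ) < (d:ℝ) - α := by linarith
  have hp1 : 1 < p := by rw [hp, lt_div_iff₀ hdα]; linarith
  have hp0 : 0 < p := by linarith
  have hβp : (α - (d:ℝ)) * p = -(d:ℝ) := by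
    rw [hp]; field_simp; ring
  -- ℓ is positive
  have hℓ : 0 < ℓ := by
    rcases Nat.eq_zero_or_pos ℓ with h | h
    · exfalso
      subst h
      have hx : (EuclideanSpace.single (⟨0, hdpos⟩ : Fin d) (1:ℝ)) ≠ 0 := by
        intro hc
        have h2 := congrArg (fun v : EuclideanSpace ℝ (Fin d) => v ⟨0, hdpos⟩) hc
        simp [EuclideanSpace.single_apply] at h2
      exact hKne _ hx (Subsingleton.elim _ _)
    · exact h
  set ed : EuclideanSpace ℝ (Fin d) := EuclideanSpace.single (⟨0, hdpos⟩ : Fin d) (1:ℝ) with hed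
  have hned : ‖ed‖ = 1 := by rw [hed, EuclideanSpace.norm_single]; norm_num
  set eℓ : EuclideanSpace ℝ (Fin ℓ) := EuclideanSpace.single (⟨0, hℓ⟩ : Fin ℓ) (1:ℝ) with heℓ
  have hneℓ : ‖eℓ‖ = 1 := by rw [heℓ, EuclideanSpace.norm_single]; norm_num
  set L₀ : ℝ := max L 0 with hL₀def
  set L₁ : ℝ := max L' 0 with hL₁def
  have hL₀ : 0 ≤ L₀ := le_max_right _ _
  have hL₁ : 0 ≤ L₁ := le_max_right _ _
  have hKL' : ∀ v w : EuclideanSpace ℝ (Fin d), ‖v‖ = 1 → ‖w‖ = 1 →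
      ‖K v - K w‖ ≤ L₀ * ‖v - w‖ := fun v w hv hw =>
    (hKL v w hv hw).trans (mul_le_mul_of_nonneg_right (le_max_left _ _) (norm_nonneg _))
  have hΦL' : ∀ v w : EuclideanSpace ℝ (Fin ℓ), ‖v‖ = 1 → ‖w‖ = 1 →
      |Φ v - Φ w| ≤ L₁ * ‖v - w‖ := fun v w hv hw =>
    (hΦL v w hv hw).trans (mul_le_mul_of_nonneg_right (le_max_left _ _) (norm_nonneg _))
  set MK : ℝ := 2 * L₀ + ‖K ed‖ with hMKdef
  have hMKnn : 0 ≤ MK := by positivity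
  have hMK : ∀ w : EuclideanSpace ℝ (Fin d), ‖w‖ = 1 → ‖K w‖ ≤ MK := by
    intro w hw
    have h1 : ‖K w‖ - ‖K ed‖ ≤ ‖K w - K ed‖ := norm_sub_norm_le _ _
    have h2 : ‖K w - K ed‖ ≤ L₀ * ‖w - ed‖ := hKL' w ed hw hned
    have h3 : ‖w - ed‖ ≤ 2 := by
      calc ‖w - ed‖ ≤ ‖w‖ + ‖ed‖ := norm_sub_le _ _
      _ = 2 := by rw [hw, hned]; norm_num
    have h4 : L₀ * ‖w - ed‖ ≤ L₀ * 2 := mul_le_mul_of_nonneg_left h3 hL₀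
    linarith
  set CΦ : ℝ := 2 * L₁ + |Φ eℓ| with hCΦdef
  have hCΦnn : 0 ≤ CΦ := by positivity
  have hCΦ : ∀ v : EuclideanSpace ℝ (Fin ℓ), ‖v‖ = 1 → |Φ v| ≤ CΦ := by
    intro v hv
    have h1 : |Φ v| - |Φ eℓ| ≤ |Φ v - Φ eℓ| := abs_sub_abs_le_abs_sub _ _
    have h2 : |Φ v - Φ eℓ| ≤ L₁ * ‖v - eℓ‖ := hΦL' v eℓ hv hneℓ
    have h3 : ‖v - eℓ‖ ≤ 2 := by
      calc ‖v - eℓ‖ ≤ ‖v‖ + ‖eℓ‖ := norm_sub_le _ _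
      _ = 2 := by rw [hv, hneℓ]; norm_num
    have h4 : L₁ * ‖v - eℓ‖ ≤ L₁ * 2 := mul_le_mul_of_nonneg_left h3 hL₁
    linarith
  have hΦ0 : Φ 0 = 0 := by
    have h2 := hΦ 0 2 two_pos
    rw [smul_zero] at h2
    have h2p : (1:ℝ) < 2 ^ p := (Real.one_lt_rpow_iff_of_pos two_pos).2 (Or.inl ⟨one_lt_two, hp0⟩)
    have h3 : (2 ^ p - 1) * Φ 0 = 0 := by linarith
    rcases mul_eq_zero.1 h3 with h | h
    · linarith
    · exact h
  have hΦb : ∀ v : EuclideanSpace ℝ (Fin ℓ), |Φ v| ≤ CΦ * ‖v‖ ^ p := by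
    intro v
    rcases eq_or_ne v 0 with rfl | hv
    · rw [hΦ0, norm_zero, Real.zero_rpow hp0.ne', abs_zero, mul_zero]
    · have hv0 : (0:ℝ) < ‖v‖ := norm_pos_iff.2 hv
      have h1 := hΦ (‖v‖⁻¹ • v) ‖v‖ hv0
      rw [smul_inv_smul₀ hv0.ne'] at h1
      rw [h1, abs_mul, abs_of_pos (Real.rpow_pos_of_pos hv0 p), mul_comm]
      exact mul_le_mul_of_nonneg_right (hCΦ _ (norm_smul_inv_norm hv))
        (Real.rpow_nonneg (norm_nonneg v) p)
  have hKh : ∀ z : EuclideanSpace ℝ (Fin d), z ≠ 0 →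
      K z = ‖z‖ ^ (α - (d:ℝ)) • K (‖z‖⁻¹ • z) := by
    intro z hz
    have hz0 : (0:ℝ) < ‖z‖ := norm_pos_iff.2 hz
    have h1 := hK (‖z‖⁻¹ • z) ‖z‖ hz0
    rw [smul_inv_smul₀ hz0.ne'] at h1
    exact h1
  obtain ⟨cβ, hcβnn, hcβ⟩ := aux_rpow_lip (α - d)
  obtain ⟨cp, hcpnn, hcp⟩ := aux_rpow_lip p
  set C₀ : ℝ := MK * cβ + 4 * L₀ with hC₀def
  have hC₀nn : 0 ≤ C₀ := by positivity
  -- annulus Lipschitz bound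
  have hann : ∀ z w : EuclideanSpace ℝ (Fin d), ‖z‖ ∈ Set.Icc (1/2:ℝ) (3/2) → ‖w‖ = 1 →
      ‖K z - K w‖ ≤ C₀ * ‖z - w‖ := by
    intro z w hz1 hw1
    have hz : z ≠ 0 := by
      intro h; rw [h, norm_zero] at hz1; have := hz1.1; norm_num at this
    have hz0 : (0:ℝ) < ‖z‖ := norm_pos_iff.2 hz
    have hw : w ≠ 0 := by intro h; rw [h, norm_zero] at hw1; norm_num at hw1
    have hu1 : ‖(‖z‖⁻¹ • z : EuclideanSpace ℝ (Fin d))‖ = 1 := norm_smul_inv_norm hz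
    have key : K z - K w = (‖z‖ ^ (α - (d:ℝ)) - 1) • K (‖z‖⁻¹ • z) + (K (‖z‖⁻¹ • z) - K w) := by
      rw [hKh z hz, sub_smul, one_smul]; abel
    have huw : ‖(‖z‖⁻¹ • z : EuclideanSpace ℝ (Fin d)) - w‖ ≤ 4 * ‖z - w‖ := by
      have h := aux_unit_sub z w hz
      rw [hw1, inv_one, one_smul] at h
      refine h.trans ?_
      rw [div_le_iff₀ hz0]
      calc 2 * ‖z - w‖ = 4 * ‖z - w‖ * (1/2) := by ring
      _ ≤ 4 * ‖z - w‖ * ‖z‖ := mul_le_mul_of_nonneg_left hz1.1 (by positivity)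
    have hzr : |‖z‖ ^ (α - (d:ℝ)) - 1| ≤ cβ * ‖z - w‖ := by
      have h1 : |‖z‖ ^ (α - (d:ℝ)) - (1:ℝ) ^ (α - (d:ℝ))| ≤ cβ * |‖z‖ - 1| :=
        hcβ _ _ hz1 (by norm_num)
      rw [Real.one_rpow] at h1
      refine h1.trans (mul_le_mul_of_nonneg_left ?_ hcβnn)
      calc |‖z‖ - 1| = |‖z‖ - ‖w‖| := by rw [hw1]
      _ ≤ ‖z - w‖ := abs_norm_sub_norm_le z w
    calc ‖K z - K w‖
        ≤ |‖z‖ ^ (α - (d:ℝ)) - 1| * ‖K (‖z‖⁻¹ • z)‖ + ‖K (‖z‖⁻¹ • z) - K w‖ := by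
          rw [key]
          refine (norm_add_le _ _).trans ?_
          rw [norm_smul, Real.norm_eq_abs]
    _ ≤ (cβ * ‖z - w‖) * MK + L₀ * (4 * ‖z - w‖) := by
          gcongr
          · exact hMK _ hu1
          · exact (hKL' _ _ hu1 hw1).trans (by gcongr)
    _ = C₀ * ‖z - w‖ := by rw [hC₀def]; ring
  set M₂ : ℝ := max M₁ 0 with hM₂def
  have hM₂nn : 0 ≤ M₂ := le_max_right _ _
  set Cb : ℝ := M₂ * C₀ with hCbdef
  have hCbnn : 0 ≤ Cb := by positivity
  set C1 : ℝ := (CΦ * cp + 4 * L₁) * MK ^ (p - 1) * Cb with hC1def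
  have hC1nn : 0 ≤ C1 := by
    apply mul_nonneg (mul_nonneg (by positivity) (Real.rpow_nonneg hMKnn _)) hCbnn
  set C2 : ℝ := CΦ * (3 ^ p + 2 ^ p) * Cb ^ p with hC2def
  have hC2nn : 0 ≤ C2 := by
    apply mul_nonneg (mul_nonneg hCΦnn (by positivity)) (Real.rpow_nonneg hCbnn _)
  -- continuity of K away from 0
  have hKsph : ContinuousOn K (Metric.sphere (0 : EuclideanSpace ℝ (Fin d)) 1) := by
    apply LipschitzOnWith.continuousOn (K := L₀.toNNReal)
    apply LipschitzOnWith.of_dist_le_mul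
    intro v hv w hw
    rw [mem_sphere_zero_iff_norm] at hv hw
    rw [dist_eq_norm, dist_eq_norm]
    refine (hKL' v w hv hw).trans (mul_le_mul_of_nonneg_right ?_ (norm_nonneg _))
    exact Real.le_coe_toNNReal L₀
  have hKcont : ContinuousOn K {z : EuclideanSpace ℝ (Fin d) | z ≠ 0} := by
    have hcongr : ∀ z ∈ {z : EuclideanSpace ℝ (Fin d) | z ≠ 0},
        ‖z‖ ^ (α - (d:ℝ)) • K (‖z‖⁻¹ • z) = K z := fun z hz => (hKh z hz).symm
    apply ContinuousOn.congr ?_ fun z hz => (hcongr z hz).symm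
    apply ContinuousOn.smul (f := fun z => ‖z‖ ^ (α - (d:ℝ))) (g := fun z => K (‖z‖⁻¹ • z))
    · intro z hz
      exact ((Real.continuousAt_rpow_const _ _ (Or.inl (norm_ne_zero_iff.2 hz))).comp
        continuous_norm.continuousAt).continuousWithinAt
    · apply hKsph.comp
      · apply ContinuousOn.smul (f := fun z : EuclideanSpace ℝ (Fin d) => ‖z‖⁻¹) (g := fun z => z)
        · exact (continuousOn_id.norm.inv₀ fun z hz => norm_ne_zero_iff.2 hz)
        · exact continuousOn_id
      · intro z hz
        rw [Set.mem_setOf_eq] at hz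
        rw [mem_sphere_zero_iff_norm]
        exact norm_smul_inv_norm hz
  refine ⟨C1 + C2, ?_⟩
  intro f hf hsupp hint hM x hx
  have hx0 : (0:ℝ) < ‖x‖ := by linarith
  have hx1 : (1:ℝ) ≤ ‖x‖ := by linarith
  have hxne : x ≠ 0 := norm_pos_iff.1 hx0
  have hw1 : ‖(‖x‖⁻¹ • x : EuclideanSpace ℝ (Fin d))‖ = 1 := norm_smul_inv_norm hxne
  have hKx : K x = ‖x‖ ^ (α - (d:ℝ)) • K (‖x‖⁻¹ • x) := hKh x hxne
  have haub : ‖K x‖ ≤ MK * ‖x‖ ^ (α - (d:ℝ)) := by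
    rw [hKx, norm_smul, Real.norm_eq_abs, abs_of_pos (Real.rpow_pos_of_pos hx0 _), mul_comm]
    exact mul_le_mul_of_nonneg_right (hMK _ hw1) (Real.rpow_nonneg hx0.le _)
  set B := Metric.closedBall (0 : EuclideanSpace ℝ (Fin d)) 1 with hBdef
  have hBmeas : MeasurableSet B := measurableSet_closedBall
  have hfz : ∀ y, y ∉ B → f y = 0 := fun y hy =>
    Function.notMem_support.1 fun hs => hy (hsupp hs)
  have hxy_ne : ∀ y ∈ B, (1:ℝ) ≤ ‖x - y‖ := by
    intro y hy
    have hyn : ‖y‖ ≤ 1 := mem_closedBall_zero_iff.1 hy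
    have := norm_sub_norm_le x y
    linarith [norm_sub_norm_le x y]
  have hKxycont : ContinuousOn (fun y => K (x - y)) B := by
    apply hKcont.comp
    · exact (continuous_const.sub continuous_id).continuousOn
    · intro y hy
      rw [Set.mem_setOf_eq]
      intro h
      have := hxy_ne y hy
      rw [h, norm_zero] at this
      norm_num at this
  have hKb : ∀ y ∈ B, ‖K (x - y)‖ ≤ MK := by
    intro y hy
    have h1 := hxy_ne y hy
    have hne : x - y ≠ 0 := by
      intro h; rw [h, norm_zero] at h1; norm_num at h1
    rw [hKh _ hne, norm_smul, Real.norm_eq_abs,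
      abs_of_pos (Real.rpow_pos_of_pos (by linarith : (0:ℝ) < ‖x - y‖) _)]
    calc ‖x - y‖ ^ (α - (d:ℝ)) * ‖K (‖x - y‖⁻¹ • (x - y))‖ ≤ 1 * MK := by
          apply mul_le_mul (Real.rpow_le_one_of_one_le_of_nonpos h1 (by linarith))
            (hMK _ (norm_smul_inv_norm hne)) (norm_nonneg _) zero_le_one
    _ = MK := one_mul _
  have hg : Integrable (fun y => f y • K (x - y)) := by
    have heq : (fun y => f y • K (x - y)) = B.indicator (fun y => f y • K (x - y)) := by
      funext y
      by_cases hy : y ∈ B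
      · rw [Set.indicator_of_mem hy]
      · rw [Set.indicator_of_notMem hy, hfz y hy, zero_smul]
    rw [heq, integrable_indicator_iff hBmeas]
    apply Integrable.mono' ((hf.abs.const_mul MK).restrict (s := B))
      ((hf.aestronglyMeasurable.restrict).smul (hKxycont.aestronglyMeasurable hBmeas))
    refine (ae_restrict_iff' hBmeas).2 (Filter.Eventually.of_forall fun y hy => ?_)
    rw [show (f • fun y => K (x - y)) y = f y • K (x - y) from rfl, norm_smul, Real.norm_eq_abs, mul_comm (MK) _]
    exact mul_le_mul_of_nonneg_left (hKb y hy) (abs_nonneg _)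
  have hg2 : Integrable (fun y => f y • K x) := hf.smul_const (K x)
  have hKxint : (∫ y, f y • K x) = K x := by
    rw [integral_smul_const, hint, one_smul]
  have hib : (∫ y, f y • K (x - y)) - K x = ∫ y, (f y • K (x - y) - f y • K x) := by
    rw [integral_sub hg hg2, hKxint]
  have hptw : ∀ y, ‖f y • K (x - y) - f y • K x‖ ≤ |f y| * (C₀ * ‖x‖ ^ (α - (d:ℝ) - 1)) := by
    intro y
    rw [← smul_sub, norm_smul, Real.norm_eq_abs]
    rcases eq_or_ne (f y) 0 with h | h
    · rw [h, abs_zero, zero_mul, zero_mul]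
    · have hy : ‖y‖ ≤ 1 := mem_closedBall_zero_iff.1 (hsupp (Function.mem_support.2 h))
      apply mul_le_mul_of_nonneg_left ?_ (abs_nonneg _)
      set z : EuclideanSpace ℝ (Fin d) := ‖x‖⁻¹ • (x - y) with hzdef
      have hKzz : K (x - y) = ‖x‖ ^ (α - (d:ℝ)) • K z := by
        have : x - y = ‖x‖ • z := (smul_inv_smul₀ hx0.ne' _).symm
        rw [this, hK z ‖x‖ hx0]
      have hzwn : ‖z - ‖x‖⁻¹ • x‖ ≤ ‖x‖⁻¹ := by
        have hzw : z - ‖x‖⁻¹ • x = ‖x‖⁻¹ • ((x - y) - x) := by rw [hzdef, ← smul_sub]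
        rw [hzw, norm_smul, norm_inv, norm_norm, show x - y - x = -y by abel, norm_neg]
        calc ‖x‖⁻¹ * ‖y‖ ≤ ‖x‖⁻¹ * 1 := by gcongr
        _ = ‖x‖⁻¹ := mul_one _
      have hzmem : ‖z‖ ∈ Set.Icc (1/2:ℝ) (3/2) := by
        have hzn : ‖z‖ = ‖x - y‖ / ‖x‖ := by
          rw [hzdef, norm_smul, norm_inv, norm_norm]; ring
        rw [hzn]
        constructor
        · rw [le_div_iff₀ hx0]
          linarith [norm_sub_norm_le x y]
        · rw [div_le_iff₀ hx0]
          linarith [norm_sub_le x y]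
      have h3 := hann z (‖x‖⁻¹ • x) hzmem hw1
      calc ‖K (x - y) - K x‖ = ‖x‖ ^ (α - (d:ℝ)) * ‖K z - K (‖x‖⁻¹ • x)‖ := by
            rw [hKzz, hKx, ← smul_sub, norm_smul, Real.norm_eq_abs,
              abs_of_pos (Real.rpow_pos_of_pos hx0 _)]
      _ ≤ ‖x‖ ^ (α - (d:ℝ)) * (C₀ * ‖x‖⁻¹) := by
            apply mul_le_mul_of_nonneg_left _ (Real.rpow_nonneg hx0.le _)
            exact h3.trans (mul_le_mul_of_nonneg_left hzwn hC₀nn)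
      _ = C₀ * ‖x‖ ^ (α - (d:ℝ) - 1) := by
            rw [show α - (d:ℝ) - 1 = (α - (d:ℝ)) + (-1) by ring, Real.rpow_add hx0,
              Real.rpow_neg_one]
            ring
  have hbnorm : ‖(∫ y, f y • K (x - y)) - K x‖ ≤ Cb * ‖x‖ ^ (α - (d:ℝ) - 1) := by
    rw [hib]
    calc ‖∫ y, (f y • K (x - y) - f y • K x)‖
        ≤ ∫ y, ‖f y • K (x - y) - f y • K x‖ := norm_integral_le_integral_norm _
    _ ≤ ∫ y, |f y| * (C₀ * ‖x‖ ^ (α - (d:ℝ) - 1)) := by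
          apply integral_mono (hg.sub hg2).norm (hf.abs.mul_const _) hptw
    _ = (∫ y, |f y|) * (C₀ * ‖x‖ ^ (α - (d:ℝ) - 1)) := integral_mul_const _ _
    _ ≤ M₂ * (C₀ * ‖x‖ ^ (α - (d:ℝ) - 1)) := by
          apply mul_le_mul_of_nonneg_right (hM.trans (le_max_left _ _)) (by positivity)
    _ = Cb * ‖x‖ ^ (α - (d:ℝ) - 1) := by rw [hCbdef]; ring
  -- endgame
  set I : EuclideanSpace ℝ (Fin ℓ) := ∫ y, f y • K (x - y) with hIdef
  set a : EuclideanSpace ℝ (Fin ℓ) := K x with hadef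
  have hT0 : (0:ℝ) ≤ ‖x‖ ^ (-(d:ℝ) - 1) := Real.rpow_nonneg hx0.le _
  have hane : a ≠ 0 := hKne x hxne
  have hna0 : (0:ℝ) < ‖a‖ := norm_pos_iff.2 hane
  have hIub : ‖I‖ ≤ ‖a‖ + ‖I - a‖ := by
    calc ‖I‖ = ‖a + (I - a)‖ := by rw [add_sub_cancel]
    _ ≤ ‖a‖ + ‖I - a‖ := norm_add_le _ _
  have hIlb : ‖a‖ - ‖I - a‖ ≤ ‖I‖ := by
    have h := norm_sub_norm_le a I
    rw [norm_sub_rev] at h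
    linarith
  have hb0 : (0:ℝ) ≤ ‖I - a‖ := norm_nonneg _
  rcases le_or_gt (2 * ‖I - a‖) ‖a‖ with hcase | hcase
  · -- perturbative case
    have hIpos : (0:ℝ) < ‖I‖ := by linarith
    have hIne : I ≠ 0 := norm_pos_iff.1 hIpos
    have hΦI : Φ I = ‖I‖ ^ p * Φ (‖I‖⁻¹ • I) := by
      have h1 := hΦ (‖I‖⁻¹ • I) ‖I‖ hIpos
      rw [smul_inv_smul₀ hIpos.ne'] at h1; exact h1
    have hΦa : Φ a = ‖a‖ ^ p * Φ (‖a‖⁻¹ • a) := by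
      have h1 := hΦ (‖a‖⁻¹ • a) ‖a‖ hna0
      rw [smul_inv_smul₀ hna0.ne'] at h1; exact h1
    set u : EuclideanSpace ℝ (Fin ℓ) := ‖I‖⁻¹ • I with hudef
    set v : EuclideanSpace ℝ (Fin ℓ) := ‖a‖⁻¹ • a with hvdef
    have hu1 : ‖u‖ = 1 := norm_smul_inv_norm hIne
    have hv1 : ‖v‖ = 1 := norm_smul_inv_norm hane
    have hrmem : ‖I‖ / ‖a‖ ∈ Set.Icc (1/2:ℝ) (3/2) := by
      constructor
      · rw [le_div_iff₀ hna0]; linarith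
      · rw [div_le_iff₀ hna0]; linarith
    have hratio : |(‖I‖ / ‖a‖) ^ p - 1| ≤ cp * (‖I - a‖ / ‖a‖) := by
      have h1 : |(‖I‖ / ‖a‖) ^ p - (1:ℝ) ^ p| ≤ cp * |‖I‖ / ‖a‖ - 1| :=
        hcp _ _ hrmem (by norm_num)
      rw [Real.one_rpow] at h1
      refine h1.trans (mul_le_mul_of_nonneg_left ?_ hcpnn)
      rw [show ‖I‖ / ‖a‖ - 1 = (‖I‖ - ‖a‖) / ‖a‖ by field_simp, abs_div,
        abs_of_pos hna0]
      gcongr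
      exact abs_norm_sub_norm_le I a
    have hIp : ‖I‖ ^ p = ‖a‖ ^ p * (‖I‖ / ‖a‖) ^ p := by
      rw [← Real.mul_rpow hna0.le (by positivity)]
      congr 1
      field_simp
    have hdiff1 : |‖I‖ ^ p - ‖a‖ ^ p| ≤ ‖a‖ ^ p * (cp * (‖I - a‖ / ‖a‖)) := by
      rw [hIp, show ‖a‖ ^ p * (‖I‖ / ‖a‖) ^ p - ‖a‖ ^ p = ‖a‖ ^ p * ((‖I‖ / ‖a‖) ^ p - 1)
        by ring, abs_mul, abs_of_pos (Real.rpow_pos_of_pos hna0 p)]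
      exact mul_le_mul_of_nonneg_left hratio (Real.rpow_nonneg hna0.le p)
    have huv : ‖u - v‖ ≤ 4 * ‖I - a‖ / ‖a‖ := by
      refine (aux_unit_sub I a hIne).trans ?_
      rw [div_le_div_iff₀ hIpos hna0]
      have h8 : ‖a‖ ≤ 2 * ‖I‖ := by linarith
      calc 2 * ‖I - a‖ * ‖a‖ ≤ 2 * ‖I - a‖ * (2 * ‖I‖) :=
            mul_le_mul_of_nonneg_left h8 (by positivity)
      _ = 4 * ‖I - a‖ * ‖I‖ := by ring
    have hsplit : |Φ I - Φ a| ≤ |‖I‖ ^ p - ‖a‖ ^ p| * |Φ u| + ‖a‖ ^ p * |Φ u - Φ v| := by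
      rw [hΦI, hΦa]
      calc |‖I‖ ^ p * Φ u - ‖a‖ ^ p * Φ v|
          = |(‖I‖ ^ p - ‖a‖ ^ p) * Φ u + ‖a‖ ^ p * (Φ u - Φ v)| := by ring_nf
      _ ≤ |(‖I‖ ^ p - ‖a‖ ^ p) * Φ u| + |‖a‖ ^ p * (Φ u - Φ v)| := abs_add_le _ _
      _ = |‖I‖ ^ p - ‖a‖ ^ p| * |Φ u| + ‖a‖ ^ p * |Φ u - Φ v| := by
            rw [abs_mul, abs_mul, abs_of_pos (Real.rpow_pos_of_pos hna0 p)]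
    have hAnn : (0:ℝ) ≤ CΦ * cp + 4 * L₁ := by
      have := mul_nonneg hCΦnn hcpnn
      linarith
    have hfinal1 : |Φ I - Φ a| ≤ (CΦ * cp + 4 * L₁) * ‖a‖ ^ (p - 1) * ‖I - a‖ := by
      have h1 : |‖I‖ ^ p - ‖a‖ ^ p| * |Φ u| ≤ (‖a‖ ^ p * (cp * (‖I - a‖ / ‖a‖))) * CΦ :=
        mul_le_mul hdiff1 (hCΦ u hu1) (abs_nonneg _) (by positivity)
      have h2 : ‖a‖ ^ p * |Φ u - Φ v| ≤ ‖a‖ ^ p * (L₁ * (4 * ‖I - a‖ / ‖a‖)) := by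
        apply mul_le_mul_of_nonneg_left _ (Real.rpow_nonneg hna0.le p)
        exact (hΦL' u v hu1 hv1).trans (mul_le_mul_of_nonneg_left huv hL₁)
      have hap1 : ‖a‖ ^ (p - 1) = ‖a‖ ^ p / ‖a‖ := Real.rpow_sub_one hna0.ne' p
      calc |Φ I - Φ a| ≤ _ := hsplit
      _ ≤ (‖a‖ ^ p * (cp * (‖I - a‖ / ‖a‖))) * CΦ + ‖a‖ ^ p * (L₁ * (4 * ‖I - a‖ / ‖a‖)) :=
            add_le_add h1 h2
      _ = (CΦ * cp + 4 * L₁) * (‖a‖ ^ p / ‖a‖) * ‖I - a‖ := by field_simp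
      _ = (CΦ * cp + 4 * L₁) * ‖a‖ ^ (p - 1) * ‖I - a‖ := by rw [hap1]
    have hap2 : ‖a‖ ^ (p - 1) ≤ MK ^ (p - 1) * ‖x‖ ^ ((α - (d:ℝ)) * (p - 1)) := by
      calc ‖a‖ ^ (p - 1) ≤ (MK * ‖x‖ ^ (α - (d:ℝ))) ^ (p - 1) :=
            Real.rpow_le_rpow (norm_nonneg a) haub (by linarith)
      _ = MK ^ (p - 1) * (‖x‖ ^ (α - (d:ℝ))) ^ (p - 1) :=
            Real.mul_rpow hMKnn (Real.rpow_nonneg hx0.le _)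
      _ = MK ^ (p - 1) * ‖x‖ ^ ((α - (d:ℝ)) * (p - 1)) := by
            rw [← Real.rpow_mul (norm_nonneg x)]
    calc |Φ I - Φ a| ≤ (CΦ * cp + 4 * L₁) * ‖a‖ ^ (p - 1) * ‖I - a‖ := hfinal1
    _ ≤ (CΦ * cp + 4 * L₁) * (MK ^ (p - 1) * ‖x‖ ^ ((α - (d:ℝ)) * (p - 1))) *
          (Cb * ‖x‖ ^ (α - (d:ℝ) - 1)) := by
          apply mul_le_mul (mul_le_mul_of_nonneg_left hap2 hAnn) hbnorm hb0
          exact mul_nonneg hAnn (mul_nonneg (Real.rpow_nonneg hMKnn _)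
            (Real.rpow_nonneg hx0.le _))
    _ = C1 * (‖x‖ ^ ((α - (d:ℝ)) * (p - 1)) * ‖x‖ ^ (α - (d:ℝ) - 1)) := by
          rw [hC1def]; ring
    _ = C1 * ‖x‖ ^ ((α - (d:ℝ)) * (p - 1) + (α - (d:ℝ) - 1)) := by
          rw [← Real.rpow_add hx0]
    _ = C1 * ‖x‖ ^ (-(d:ℝ) - 1) := by
          congr 1
          have : (α - (d:ℝ)) * (p - 1) + (α - (d:ℝ) - 1) = (α - (d:ℝ)) * p - 1 := by ring
          rw [this, hβp]
    _ ≤ (C1 + C2) * ‖x‖ ^ (-(d:ℝ) - 1) :=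
          mul_le_mul_of_nonneg_right (by linarith) hT0
  · -- crude case
    have hIub3 : ‖I‖ ≤ 3 * ‖I - a‖ := by linarith
    have h1 : |Φ I - Φ a| ≤ CΦ * ‖I‖ ^ p + CΦ * ‖a‖ ^ p := by
      calc |Φ I - Φ a| ≤ |Φ I| + |Φ a| := abs_sub _ _
      _ ≤ CΦ * ‖I‖ ^ p + CΦ * ‖a‖ ^ p := add_le_add (hΦb I) (hΦb a)
    have h2 : ‖I‖ ^ p ≤ 3 ^ p * ‖I - a‖ ^ p := by
      calc ‖I‖ ^ p ≤ (3 * ‖I - a‖) ^ p := Real.rpow_le_rpow (norm_nonneg I) hIub3 hp0.le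
      _ = 3 ^ p * ‖I - a‖ ^ p := Real.mul_rpow (by norm_num) hb0
    have h3 : ‖a‖ ^ p ≤ 2 ^ p * ‖I - a‖ ^ p := by
      calc ‖a‖ ^ p ≤ (2 * ‖I - a‖) ^ p := Real.rpow_le_rpow hna0.le (by linarith) hp0.le
      _ = 2 ^ p * ‖I - a‖ ^ p := Real.mul_rpow (by norm_num) hb0
    have h4 : ‖I - a‖ ^ p ≤ Cb ^ p * ‖x‖ ^ (-(d:ℝ) - 1) := by
      have h5 : ‖I - a‖ ^ p ≤ (Cb * ‖x‖ ^ (α - (d:ℝ) - 1)) ^ p :=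
        Real.rpow_le_rpow hb0 hbnorm hp0.le
      have h6 : (Cb * ‖x‖ ^ (α - (d:ℝ) - 1)) ^ p
          = Cb ^ p * ‖x‖ ^ ((α - (d:ℝ) - 1) * p) := by
        rw [Real.mul_rpow hCbnn (Real.rpow_nonneg hx0.le _), ← Real.rpow_mul (norm_nonneg x)]
      have h7 : ‖x‖ ^ ((α - (d:ℝ) - 1) * p) ≤ ‖x‖ ^ (-(d:ℝ) - 1) := by
        apply Real.rpow_le_rpow_of_exponent_le hx1
        have e : (α - (d:ℝ) - 1) * p = (α - (d:ℝ)) * p - p := by ring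
        rw [e, hβp]
        linarith
      calc ‖I - a‖ ^ p ≤ Cb ^ p * ‖x‖ ^ ((α - (d:ℝ) - 1) * p) := h5.trans_eq h6
      _ ≤ Cb ^ p * ‖x‖ ^ (-(d:ℝ) - 1) :=
            mul_le_mul_of_nonneg_left h7 (Real.rpow_nonneg hCbnn p)
    have h3p : (0:ℝ) ≤ 3 ^ p := Real.rpow_nonneg (by norm_num) p
    have h2p : (0:ℝ) ≤ 2 ^ p := Real.rpow_nonneg (by norm_num) p
    calc |Φ I - Φ a| ≤ CΦ * ‖I‖ ^ p + CΦ * ‖a‖ ^ p := h1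
    _ ≤ CΦ * (3 ^ p * ‖I - a‖ ^ p) + CΦ * (2 ^ p * ‖I - a‖ ^ p) :=
          add_le_add (mul_le_mul_of_nonneg_left h2 hCΦnn)
            (mul_le_mul_of_nonneg_left h3 hCΦnn)
    _ = CΦ * (3 ^ p + 2 ^ p) * ‖I - a‖ ^ p := by ring
    _ ≤ CΦ * (3 ^ p + 2 ^ p) * (Cb ^ p * ‖x‖ ^ (-(d:ℝ) - 1)) := by
          apply mul_le_mul_of_nonneg_left h4
          exact mul_nonneg hCΦnn (by linarith)
    _ = C2 * ‖x‖ ^ (-(d:ℝ) - 1) := by rw [hC2def]; ring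
    _ ≤ (C1 + C2) * ‖x‖ ^ (-(d:ℝ) - 1) :=
          mul_le_mul_of_nonneg_right (by linarith) hT0
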